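/- For integers 4 ≤ k ≤ d with k < d, setting b_j = d C(d,j) j^{d-1}, one has ∑_{j=k}^{d} b_j (-1)^{j-k} C(j,k) j^{-k} = 0, while for k = d the sum equals 1. -/

import Mathlib

open Finset

lemma fwdDiff_pow_eq_zero (m : ℕ) : ∀ n, m < n → (fwdDiff (1:ℕ))^[n] (fun x : ℕ ↦ (x : ℝ) ^ m) = 0 := by
  induction m using Nat.strong_induction_on with
  | _ m IH =>
    intro n hn
    obtain ⟨n, rfl⟩ : ∃ n', n = n' + 1 := ⟨n - 1, by omega⟩
    rw [Function.iterate_succ_apply]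
    have hΔ : fwdDiff (1:ℕ) (fun x : ℕ ↦ (x : ℝ) ^ m)
        = ∑ j ∈ range m, (m.choose j : ℝ) • fun x : ℕ ↦ (x : ℝ) ^ j := by
      funext x
      have hb : ((x : ℝ) + 1) ^ m = ∑ j ∈ range (m+1), (x:ℝ)^j * (m.choose j) := by
        simpa using add_pow (x : ℝ) 1 m
      simp only [fwdDiff, Finset.sum_apply, Pi.smul_apply, smul_eq_mul, Nat.cast_add, Nat.cast_one]
      rw [hb, Finset.sum_range_succ]
      simp [mul_comm]
    rw [hΔ]
    rw [fwdDiff_iter_finset_sum]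
    refine Finset.sum_eq_zero fun j hj => ?_
    have hj' := Finset.mem_range.mp hj
    rw [fwdDiff_iter_const_smul, IH j hj' n (by omega), smul_zero]

lemma alt_sum_pow (n m y : ℕ) (hm : m < n) :
    ∑ i ∈ range (n+1), (-1:ℝ)^i * (n.choose i : ℝ) * ((y + i : ℕ) : ℝ)^m = 0 := by
  have h0 := fwdDiff_iter_eq_sum_shift (1:ℕ) (fun x : ℕ ↦ (x:ℝ)^m) n y
  rw [fwdDiff_pow_eq_zero m n hm] at h0
  have h1 : ∑ i ∈ range (n+1),
      (-1:ℝ)^n * (((-1:ℤ)^(n-i) * (n.choose i : ℤ)) • ((y + i • 1 : ℕ) : ℝ)^m) = 0 := by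
    rw [← Finset.mul_sum, ← h0]
    simp
  rw [← h1]
  refine Finset.sum_congr rfl fun i hi => ?_
  have hi' : i ≤ n := by simpa using Nat.lt_succ_iff.mp (Finset.mem_range.mp hi)
  have hpow : (-1:ℝ)^n = (-1:ℝ)^(n-i) * (-1:ℝ)^i := by
    rw [← pow_add]; congr 1; omega
  have hsq : (-1:ℝ)^(n-i) * (-1:ℝ)^(n-i) = 1 := by
    rw [← pow_add, Even.neg_one_pow ⟨n-i, rfl⟩]
  simp only [zsmul_eq_mul, smul_eq_mul, mul_one]
  push_cast
  linear_combination (-((-1:ℝ)^i * (n.choose i : ℝ) * ((y:ℝ)+(i:ℝ))^m)) * hsq -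
    ((-1:ℝ)^(n-i) * (n.choose i : ℝ) * ((y:ℝ)+(i:ℝ))^m) * hpow

/-- The inversion identity `J_{k,d} = δ_{k,d}`: with `b_j = d C(d,j) j^{d-1}`, for
`4 ≤ k ≤ d` one has `∑_{j=k}^{d} b_j (-1)^{j-k} C(j,k) j^{-k} = 0` if `k < d`, and
the sum equals `1` if `k = d`. -/
theorem inversion_identity (d k : ℕ) (hk : 4 ≤ k) (hkd : k ≤ d) :
    ∑ j ∈ Finset.Icc k d,
        ((d : ℝ) * (d.choose j : ℝ) * (j : ℝ) ^ (d - 1)) * (-1 : ℝ) ^ (j - k) *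
          (j.choose k : ℝ) * ((j : ℝ) ^ k)⁻¹ =
      if k = d then 1 else 0 := by
  rcases eq_or_lt_of_le hkd with rfl | hlt
  · rw [if_pos rfl, Finset.Icc_self, Finset.sum_singleton]
    have hk0 : (k : ℝ) ≠ 0 := by positivity
    have : (k:ℝ) * (k:ℝ)^(k-1) = (k:ℝ)^k := by
      rw [← pow_succ']
      congr 1
      omega
    simp only [Nat.choose_self, Nat.cast_one, Nat.sub_self, pow_zero, mul_one, one_mul]
    rw [this, mul_inv_cancel₀ (by positivity)]
  · rw [if_neg (by omega)]
    have key : ∀ j ∈ Finset.Icc k d,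
        ((d : ℝ) * (d.choose j : ℝ) * (j : ℝ) ^ (d - 1)) * (-1 : ℝ) ^ (j - k) *
          (j.choose k : ℝ) * ((j : ℝ) ^ k)⁻¹
        = ((d:ℝ) * (d.choose k : ℝ)) *
            ((-1:ℝ)^(j-k) * (((d-k).choose (j-k) : ℕ) : ℝ) * (j:ℝ)^(d-1-k)) := by
      intro j hj
      obtain ⟨hkj, hjd⟩ := Finset.mem_Icc.mp hj
      have hj0 : (0:ℝ) < (j:ℝ) := by exact_mod_cast (show 0 < j by omega)
      have hcc : (d.choose j : ℝ) * (j.choose k : ℝ)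
          = (d.choose k : ℝ) * (((d-k).choose (j-k) : ℕ) : ℝ) := by
        rw [← Nat.cast_mul, ← Nat.cast_mul, Nat.choose_mul (n := d) hkj]
      have hpow : (j:ℝ)^(d-1) * ((j:ℝ)^k)⁻¹ = (j:ℝ)^(d-1-k) := by
        rw [eq_comm, eq_mul_inv_iff_mul_eq₀ (by positivity), ← pow_add]
        congr 1
        omega
      field_simp
      rw [show ((d:ℝ) * (d.choose j : ℝ) * (j : ℝ) ^ (d - 1)) *
          (j.choose k : ℝ) = (d:ℝ) * ((d.choose j : ℝ) * (j.choose k : ℝ)) *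
          ((j:ℝ)^(d-1)) by ring, hcc]
      rw [show (j:ℝ)^(d-1) = (j:ℝ)^(d-1-k) * (j:ℝ)^k by rw [← pow_add]; congr 1; omega]
      ring
    rw [Finset.sum_congr rfl key, ← Finset.mul_sum]
    have hIcc : Finset.Icc k d = Finset.Ico k (d+1) := by rw [Finset.Ico_add_one_right_eq_Icc]
    rw [hIcc, Finset.sum_Ico_eq_sum_range]
    have hrange : d + 1 - k = (d - k) + 1 := by omega
    rw [hrange]
    have h0 : ∑ i ∈ Finset.range ((d-k)+1),
        ((-1:ℝ)^(k+i-k) * (((d-k).choose (k+i-k) : ℕ) : ℝ) * ((k+i:ℕ):ℝ)^(d-1-k)) = 0 := by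
      rw [← alt_sum_pow (d-k) (d-1-k) k (by omega)]
      refine Finset.sum_congr rfl fun i hi => ?_
      rw [show k + i - k = i from by omega]
    rw [h0, mul_zero]
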